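/- Let t ≥ 4 be an integer, let G be a finite simple graph, and let x, y be two distinct vertices of G with |N_G(x) ∩ N_G(y)| ≥ t − 1. Then in the K_{2,t}-bootstrap closure Ĝ of G one has N_Ĝ(x) \ {y} = N_Ĝ(y) \ {x}. -/

import Mathlib

/-- `G` contains a copy of `H` as a subgraph. -/
def HasCopy {W V : Type*} (H : SimpleGraph W) (G : SimpleGraph V) : Prop :=
  ∃ f : W → V, Function.Injective f ∧ ∀ ⦃a b : W⦄, H.Adj a b → G.Adj (f a) (f b)

/-- Adding the edge `{x, y}` to `G` creates a new copy of `H` containing that edge. -/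
def CreatesCopy {W V : Type*} (H : SimpleGraph W) (G : SimpleGraph V) (x y : V) : Prop :=
  ∃ f : W → V, Function.Injective f ∧
    (∀ ⦃a b : W⦄, H.Adj a b →
      G.Adj (f a) (f b) ∨ (f a = x ∧ f b = y) ∨ (f a = y ∧ f b = x)) ∧
    ∃ a b : W, H.Adj a b ∧ ((f a = x ∧ f b = y) ∨ (f a = y ∧ f b = x))

/-- One step of the `H`-bootstrap process: add to `G` all non-edges whose addition
creates a new copy of `H` containing them. -/
def bootStep {W V : Type*} (H : SimpleGraph W) (G : SimpleGraph V) : SimpleGraph V where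
  Adj x y := G.Adj x y ∨ (¬ G.Adj x y ∧ x ≠ y ∧ CreatesCopy H G x y)
  symm := by
    constructor
    intro x y h
    rcases h with h | ⟨hn, hne, f, hf, hmap, a, b, hab, hor⟩
    · exact Or.inl h.symm
    · exact Or.inr ⟨fun h' => hn h'.symm, hne.symm, f, hf,
        fun a b hab => by have := hmap hab; tauto, a, b, hab, hor.symm⟩
  loopless := by
    constructor
    intro x h
    rcases h with h | ⟨_, hne, _⟩
    · exact G.loopless.irrefl x h
    · exact hne rfl

def bootSeq {W V : Type*} (H : SimpleGraph W) (G : SimpleGraph V) : ℕ → SimpleGraph V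
  | 0 => G
  | n + 1 => bootStep H (bootSeq H G n)

/-- The `H`-bootstrap closure of `G`: the union of the iterated bootstrap steps. -/
def bootClosure {W V : Type*} (H : SimpleGraph W) (G : SimpleGraph V) : SimpleGraph V :=
  ⨆ n, bootSeq H G n

/-- `G` percolates in the `H`-bootstrap process, i.e. its closure is complete. -/
def Percolates {W V : Type*} (H : SimpleGraph W) (G : SimpleGraph V) : Prop :=
  bootClosure H G = ⊤

lemma le_bootSeq {W V : Type*} (H : SimpleGraph W) (G : SimpleGraph V) (n : ℕ) :
    G ≤ bootSeq H G n := by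
  induction n with
  | zero => exact le_rfl
  | succ n ih => exact le_trans ih (fun a b h => Or.inl h)

lemma key_step {V : Type*} [Fintype V] (t : ℕ) (ht : 4 ≤ t) (G : SimpleGraph V)
    (x y : V) (hxy : x ≠ y)
    (hcommon : t - 1 ≤ (G.neighborSet x ∩ G.neighborSet y).ncard)
    (n : ℕ) (z : V) (hzy : z ≠ y)
    (hadj : (bootSeq (completeBipartiteGraph (Fin 2) (Fin t)) G n).Adj x z) :
    (bootSeq (completeBipartiteGraph (Fin 2) (Fin t)) G (n + 1)).Adj y z := by
  classical
  set H := completeBipartiteGraph (Fin 2) (Fin t) with hH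
  set Gn := bootSeq H G n with hGn
  by_cases hG : Gn.Adj y z
  · exact Or.inl hG
  have hzx : z ≠ x := hadj.ne'
  have hznot : z ∉ G.neighborFinset x ∩ G.neighborFinset y := by
    intro hz
    simp only [Finset.mem_inter, SimpleGraph.mem_neighborFinset] at hz
    exact hG (le_bootSeq H G n hz.2)
  have hTcard : t - 1 ≤ (G.neighborFinset x ∩ G.neighborFinset y).card := by
    have heq : (G.neighborSet x ∩ G.neighborSet y).ncard
        = (G.neighborFinset x ∩ G.neighborFinset y).card := by
      rw [Set.ncard_eq_toFinset_card']
      congr 1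
      ext w
      simp [SimpleGraph.neighborFinset]
    exact heq ▸ hcommon
  obtain ⟨S, hST, hScard⟩ :=
    Finset.exists_subset_card_eq hTcard
  have hSx : ∀ w ∈ S, G.Adj x w := by
    intro w hw
    have h := hST hw
    simp only [Finset.mem_inter, SimpleGraph.mem_neighborFinset] at h
    exact h.1
  have hSy : ∀ w ∈ S, G.Adj y w := by
    intro w hw
    have h := hST hw
    simp only [Finset.mem_inter, SimpleGraph.mem_neighborFinset] at h
    exact h.2
  have hSz : ∀ w ∈ S, w ≠ z := fun w hw hwz => hznot (hwz ▸ hST hw)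
  set e : Fin (t - 1) → V := fun i => (S.equivFin.symm (Fin.cast hScard.symm i)).1 with he
  have hei : Function.Injective e := by
    intro i j hij
    have h1 := Subtype.ext hij
    have h2 := S.equivFin.symm.injective h1
    exact Fin.cast_injective _ h2
  have heS : ∀ i, e i ∈ S := fun i => (S.equivFin.symm (Fin.cast hScard.symm i)).2
  set g : Fin t → V := fun i => if h : (i : ℕ) < t - 1 then e ⟨i, h⟩ else z with hg
  have hgS : ∀ i : Fin t, g i = z ∨ g i ∈ S := by
    intro i
    by_cases h : (i : ℕ) < t - 1
    · right; simp only [hg, dif_pos h]; exact heS _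
    · left; simp only [hg, dif_neg h]
  have hgi : Function.Injective g := by
    intro i j hij
    simp only [hg] at hij
    by_cases hi : (i : ℕ) < t - 1 <;> by_cases hj : (j : ℕ) < t - 1
    · rw [dif_pos hi, dif_pos hj] at hij
      have h3 := hei hij
      have h4 := congrArg Fin.val h3
      exact Fin.ext h4
    · rw [dif_pos hi, dif_neg hj] at hij
      exact absurd hij (hSz _ (heS _))
    · rw [dif_neg hi, dif_pos hj] at hij
      exact absurd hij.symm (hSz _ (heS _))
    · have h4 : (i : ℕ) = t - 1 := by have := i.isLt; omega
      have h5 : (j : ℕ) = t - 1 := by have := j.isLt; omega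
      exact Fin.ext (h4.trans h5.symm)
  set f : Fin 2 ⊕ Fin t → V := Sum.elim (fun a => if a = 0 then x else y) g with hf
  have hgx : ∀ i : Fin t, g i ≠ x := by
    intro i hi
    rcases hgS i with h | h
    · exact hzx (h.symm.trans hi)
    · exact (hSx _ (hi ▸ h)).ne rfl
  have hgy : ∀ i : Fin t, g i ≠ y := by
    intro i hi
    rcases hgS i with h | h
    · exact hzy (h.symm.trans hi)
    · exact (hSy _ (hi ▸ h)).ne rfl
  have fin2 : ∀ c : Fin 2, c ≠ 0 → c = 1 := by decide
  have hfinj : Function.Injective f := by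
    rintro (a | a) (b | b) hab <;> simp only [hf, Sum.elim_inl, Sum.elim_inr] at hab
    · congr 1
      by_cases ha : a = 0 <;> by_cases hb : b = 0
      · exact ha.trans hb.symm
      · rw [if_pos ha, if_neg hb] at hab; exact absurd hab hxy
      · rw [if_neg ha, if_pos hb] at hab; exact absurd hab.symm hxy
      · exact (fin2 a ha).trans (fin2 b hb).symm
    · exfalso
      by_cases ha : a = 0
      · rw [if_pos ha] at hab; exact hgx b hab.symm
      · rw [if_neg ha] at hab; exact hgy b hab.symm
    · exfalso
      by_cases hb : b = 0
      · rw [if_pos hb] at hab; exact hgx a hab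
      · rw [if_neg hb] at hab; exact hgy a hab
    · exact congrArg Sum.inr (hgi hab)
  have hmapL : ∀ (a : Fin 2) (b : Fin t),
      Gn.Adj (f (Sum.inl a)) (f (Sum.inr b)) ∨
        (f (Sum.inl a) = y ∧ f (Sum.inr b) = z) ∨
        (f (Sum.inl a) = z ∧ f (Sum.inr b) = y) := by
    intro a b
    have hfb : f (Sum.inr b) = g b := rfl
    by_cases ha : a = 0
    · have hfa : f (Sum.inl a) = x := by simp [hf, if_pos ha]
      left
      rw [hfa, hfb]
      rcases hgS b with h | h
      · rw [h]; exact hadj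
      · exact le_bootSeq H G n (hSx _ h)
    · have hfa : f (Sum.inl a) = y := by simp [hf, if_neg ha]
      rcases hgS b with h | h
      · right; left; exact ⟨hfa, hfb.trans h⟩
      · left; rw [hfa, hfb]; exact le_bootSeq H G n (hSy _ h)
  have hlast : ¬ ((t - 1 : ℕ) < t - 1) := lt_irrefl _
  refine Or.inr ⟨hG, hzy.symm, f, hfinj, ?_, Sum.inl 1, Sum.inr ⟨t - 1, by omega⟩, ?_, ?_⟩
  · rintro (a | a) (b | b) hab
    · exact absurd hab (by simp [hH])
    · exact hmapL a b
    · rcases hmapL b a with h | ⟨h1, h2⟩ | ⟨h1, h2⟩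
      · exact Or.inl h.symm
      · exact Or.inr (Or.inr ⟨h2, h1⟩)
      · exact Or.inr (Or.inl ⟨h2, h1⟩)
    · exact absurd hab (by simp [hH])
  · simp [hH]
  · left
    refine ⟨by simp [hf], ?_⟩
    show g ⟨t - 1, _⟩ = z
    simp only [hg]
    exact dif_neg hlast

theorem stmt_0 {V : Type*} [Fintype V] (t : ℕ) (ht : 4 ≤ t) (G : SimpleGraph V)
    (x y : V) (hxy : x ≠ y)
    (hcommon : t - 1 ≤ (G.neighborSet x ∩ G.neighborSet y).ncard) :
    (bootClosure (completeBipartiteGraph (Fin 2) (Fin t)) G).neighborSet x \ {y} =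
      (bootClosure (completeBipartiteGraph (Fin 2) (Fin t)) G).neighborSet y \ {x} := by
  have hcommon' : t - 1 ≤ (G.neighborSet y ∩ G.neighborSet x).ncard := by
    rwa [Set.inter_comm]
  ext z
  simp only [Set.mem_diff, SimpleGraph.mem_neighborSet, Set.mem_singleton_iff]
  constructor
  · rintro ⟨hadj, hne⟩
    rw [bootClosure, SimpleGraph.iSup_adj] at hadj
    obtain ⟨n, hn⟩ := hadj
    have := key_step t ht G x y hxy hcommon n z hne hn
    exact ⟨by rw [bootClosure, SimpleGraph.iSup_adj]; exact ⟨n + 1, this⟩, hn.ne'⟩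
  · rintro ⟨hadj, hne⟩
    rw [bootClosure, SimpleGraph.iSup_adj] at hadj
    obtain ⟨n, hn⟩ := hadj
    have := key_step t ht G y x hxy.symm hcommon' n z hne hn
    exact ⟨by rw [bootClosure, SimpleGraph.iSup_adj]; exact ⟨n + 1, this⟩, hn.ne'⟩
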